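/- Let n ∈ ℕ, let R_n be a Hammersley type point set (for an arbitrary fixed choice function σ), let P be the Davenport-type symmetrized multiset consisting of the points (x,y) and (x,1−y) for (x,y) ∈ R_n (so P has 2^{n+1} points counted with multiplicity), and let D be the local discrepancy of P. Then ∫_0^1 ∫_0^1 D(t1,t2) dt1 dt2 = 2^{−(n+2)}. -/

import Mathlib

open MeasureTheory Set

/-- The L∞-normalized Haar function `h_{j,m}` on `[0,1)`: it is `+1` on the left half
`[2m/2^{j+1}, (2m+1)/2^{j+1})` of the dyadic interval `I_{j,m}`, `-1` on the right half
`[(2m+1)/2^{j+1}, (2m+2)/2^{j+1})`, and `0` elsewhere. -/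
noncomputable def haar (j m : ℕ) (t : ℝ) : ℝ :=
  if (2 * m : ℝ) / 2 ^ (j + 1) ≤ t ∧ t < (2 * m + 1 : ℝ) / 2 ^ (j + 1) then 1
  else if (2 * m + 1 : ℝ) / 2 ^ (j + 1) ≤ t ∧ t < (2 * m + 2 : ℝ) / 2 ^ (j + 1) then -1
  else 0

/-- First coordinate of a point of the Hammersley type point set:
`t_n/2 + t_{n-1}/2^2 + ⋯ + t_1/2^n`, where the index `i : Fin n` corresponds to `t_{i+1}`,
so the digit `t i` gets divided by `2^{n - i}`. -/
noncomputable def hamX (n : ℕ) (t : Fin n → Bool) : ℝ :=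
  ∑ i : Fin n, (if t i then (1 : ℝ) else 0) / 2 ^ (n - i.val)

/-- Second coordinate of a point of the Hammersley type point set:
`s_1/2 + s_2/2^2 + ⋯ + s_n/2^n` with `s_i = t_i` if `σ i = false` and `s_i = 1 - t_i`
if `σ i = true`, i.e. `s_i = t_i XOR σ i`. -/
noncomputable def hamY (n : ℕ) (σ : Fin n → Bool) (t : Fin n → Bool) : ℝ :=
  ∑ i : Fin n, (if (t i).xor (σ i) then (1 : ℝ) else 0) / 2 ^ (i.val + 1)

/-- The points of the symmetrized Hammersley type multiset `R̃_n`, parametrized by a digit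
vector `t` and two reflection bits: `(x,y)`, `(x,1-y)`, `(1-x,y)`, `(1-x,1-y)`. -/
noncomputable def symPoint (n : ℕ) (σ : Fin n → Bool) (z : (Fin n → Bool) × Bool × Bool) :
    ℝ × ℝ :=
  (if z.2.1 then 1 - hamX n z.1 else hamX n z.1,
   if z.2.2 then 1 - hamY n σ z.1 else hamY n σ z.1)

/-- The local discrepancy function of the symmetrized Hammersley type multiset `R̃_n`
with `N = 2^{n+2}` points counted with multiplicity. -/
noncomputable def discSym (n : ℕ) (σ : Fin n → Bool) (t1 t2 : ℝ) : ℝ :=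
  (∑ z : (Fin n → Bool) × Bool × Bool,
      if (symPoint n σ z).1 < t1 ∧ (symPoint n σ z).2 < t2 then (1 : ℝ) else 0) / 2 ^ (n + 2)
    - t1 * t2

/-- The points of the Davenport-type symmetrized multiset `R_n ∪ R_{n,1}`, parametrized by a
digit vector `t` and one reflection bit: `(x,y)` and `(x,1-y)`. -/
noncomputable def davPoint (n : ℕ) (σ : Fin n → Bool) (z : (Fin n → Bool) × Bool) : ℝ × ℝ :=
  (hamX n z.1, if z.2 then 1 - hamY n σ z.1 else hamY n σ z.1)

/-- The local discrepancy function of the Davenport-type symmetrized multiset with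
`2^{n+1}` points counted with multiplicity. -/
noncomputable def discDav (n : ℕ) (σ : Fin n → Bool) (t1 t2 : ℝ) : ℝ :=
  (∑ z : (Fin n → Bool) × Bool,
      if (davPoint n σ z).1 < t1 ∧ (davPoint n σ z).2 < t2 then (1 : ℝ) else 0) / 2 ^ (n + 1)
    - t1 * t2


/- Auxiliary lemmas -/

lemma aux_key (a : ℝ) (h0 : 0 ≤ a) (h1 : a ≤ 1) :
    ∫ t in Ico (0:ℝ) 1, (if a < t then (1:ℝ) else 0) = 1 - a := by
  have h : ∀ t, (if a < t then (1:ℝ) else 0) = (Ioi a).indicator (fun _ => (1:ℝ)) t := by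
    intro t; simp [Set.indicator_apply]
  simp_rw [h]
  rw [setIntegral_indicator measurableSet_Ioi]
  have h2 : Ico (0:ℝ) 1 ∩ Ioi a = Ioo a 1 := by
    ext x
    constructor
    · rintro ⟨⟨hx0, hx1⟩, hxa⟩; exact ⟨hxa, hx1⟩
    · rintro ⟨hxa, hx1⟩; exact ⟨⟨le_trans h0 hxa.le, hx1⟩, hxa⟩
  rw [h2]
  simp [Real.volume_Ioo, ENNReal.toReal_ofReal (by linarith : (0:ℝ) ≤ 1 - a), h1]

lemma aux_intOn (a c : ℝ) : IntegrableOn (fun t => c * if a < t then (1:ℝ) else 0) (Ico 0 1) := by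
  apply Integrable.const_mul
  have h : (fun t => if a < t then (1:ℝ) else 0) = (Ioi a).indicator (fun _ => (1:ℝ)) := by
    funext t; simp [Set.indicator_apply]
  rw [h]
  exact ((integrableOn_const_iff (C := (1:ℝ)) (by simp)).mpr (Or.inr (by simp))).indicator measurableSet_Ioi

lemma aux_intmul (c : ℝ) : IntegrableOn (fun t => c * t) (Ico 0 1) := by
  exact (((continuous_const.mul continuous_id).continuousOn (s := Icc 0 1)).integrableOn_compact
    isCompact_Icc).mono_set Ico_subset_Icc_self

lemma aux_intmul' (c : ℝ) : IntegrableOn (fun t => t * c) (Ico 0 1) := by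
  exact (((continuous_id.mul continuous_const).continuousOn (s := Icc 0 1)).integrableOn_compact
    isCompact_Icc).mono_set Ico_subset_Icc_self

lemma aux_int_id : ∫ t in Ico (0:ℝ) 1, t = 1/2 := by
  rw [MeasureTheory.integral_Ico_eq_integral_Ioo, ← MeasureTheory.integral_Ioc_eq_integral_Ioo,
    ← intervalIntegral.integral_of_le zero_le_one]
  simp

lemma aux_keymul (a c : ℝ) (h0 : 0 ≤ a) (h1 : a ≤ 1) :
    ∫ t in Ico (0:ℝ) 1, (c * if a < t then (1:ℝ) else 0) = c * (1 - a) := by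
  rw [integral_const_mul, aux_key a h0 h1]

lemma aux_sum_digit {n : ℕ} (i : Fin n) (f : Bool → ℝ) :
    ∑ t : Fin n → Bool, f (t i) = 2 ^ n / 2 * (f true + f false) := by
  rw [← (Equiv.piSplitAt i (fun _ => Bool)).symm.sum_comp (fun t => f (t i))]
  simp only [Equiv.piSplitAt_symm_apply, dif_pos]
  rw [Fintype.sum_prod_type]
  simp only [Finset.sum_const, Fintype.sum_bool, nsmul_eq_mul]
  simp [Fintype.card_fun, Fintype.card_subtype_compl]
  have e : (2:ℝ) ^ (n-1) = 2 ^ n / 2 := by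
    rw [pow_sub₀ (2:ℝ) two_ne_zero i.pos]; ring
  rw [e]; ring

lemma aux_sum_hamX (n : ℕ) :
    ∑ t : Fin n → Bool, hamX n t = (2 ^ n - 1) / 2 := by
  unfold hamX
  rw [Finset.sum_comm]
  have h : ∀ i : Fin n, ∑ t : Fin n → Bool, (if t i then (1:ℝ) else 0) / 2 ^ (n - i.val)
      = 2 ^ n / 2 / 2 ^ (n - i.val) := by
    intro i
    rw [← Finset.sum_div, aux_sum_digit i (fun b => if b then (1:ℝ) else 0)]
    norm_num
  rw [Finset.sum_congr rfl (fun i _ => h i)]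
  have h2 : ∀ i : Fin n, (2:ℝ) ^ n / 2 / 2 ^ (n - i.val) = 2 ^ i.val / 2 := by
    intro i
    rw [pow_sub₀ (2:ℝ) two_ne_zero (le_of_lt i.isLt)]
    field_simp
  rw [Finset.sum_congr rfl (fun i _ => h2 i), ← Finset.sum_div,
    Fin.sum_univ_eq_sum_range (fun i => (2:ℝ)^i), geom_sum_eq (by norm_num)]
  norm_num

lemma hamX_nonneg (n : ℕ) (t : Fin n → Bool) : 0 ≤ hamX n t := by
  apply Finset.sum_nonneg; intro i _; split <;> positivity

lemma hamX_le_one (n : ℕ) (t : Fin n → Bool) : hamX n t ≤ 1 := by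
  have h : hamX n t ≤ ∑ i : Fin n, (2:ℝ) ^ i.val / 2 ^ n := by
    apply Finset.sum_le_sum; intro i _
    rw [div_le_div_iff₀ (by positivity) (by positivity), ← pow_add]
    have e : ↑i + (n - i.val) = n := by omega
    rw [e]
    split <;> nlinarith [pow_pos (by norm_num : (0:ℝ) < 2) n]
  refine h.trans ?_
  rw [← Finset.sum_div, Fin.sum_univ_eq_sum_range (fun i => (2:ℝ)^i),
    geom_sum_eq (by norm_num)]
  rw [div_le_one (by positivity)]
  norm_num

lemma hamY_nonneg (n : ℕ) (σ t : Fin n → Bool) : 0 ≤ hamY n σ t := by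
  apply Finset.sum_nonneg; intro i _; split <;> positivity

lemma hamY_le_one (n : ℕ) (σ t : Fin n → Bool) : hamY n σ t ≤ 1 := by
  have h : hamY n σ t ≤ ∑ i : Fin n, (1:ℝ) / 2 ^ (i.val + 1) := by
    apply Finset.sum_le_sum; intro i _
    gcongr
    split <;> norm_num
  refine h.trans ?_
  have e : ∀ i : Fin n, (1:ℝ) / 2 ^ (i.val + 1) = (1/2) * (1/2)^i.val := by
    intro i; rw [pow_succ, one_div_pow]; ring
  rw [Finset.sum_congr rfl (fun i _ => e i), ← Finset.mul_sum,
    Fin.sum_univ_eq_sum_range (fun i => ((1:ℝ)/2)^i), geom_sum_eq (by norm_num)]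
  have h2 : (0:ℝ) ≤ (1/2)^n := by positivity
  have e2 : (((1:ℝ)/2)^n - 1)/((1/2) - 1) = 2*(1 - (1/2)^n) := by ring
  rw [e2]
  linarith

/-- Remark: for the local discrepancy `D` of the Davenport-type symmetrized multiset
`R_n ∪ R_{n,1}` (with `2^{n+1}` points), `∫₀¹∫₀¹ D(t₁,t₂) dt₁ dt₂ = 2^{-(n+2)}`. -/
theorem dav_disc_integral (n : ℕ) (σ : Fin n → Bool) :
    (∫ t1 in Set.Ico (0 : ℝ) 1, ∫ t2 in Set.Ico (0 : ℝ) 1, discDav n σ t1 t2)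
      = 1 / 2 ^ (n + 2) := by
  have hx0 : ∀ z : (Fin n → Bool) × Bool, 0 ≤ (davPoint n σ z).1 := fun z => hamX_nonneg n z.1
  have hx1 : ∀ z : (Fin n → Bool) × Bool, (davPoint n σ z).1 ≤ 1 := fun z => hamX_le_one n z.1
  have hy0 : ∀ z : (Fin n → Bool) × Bool, 0 ≤ (davPoint n σ z).2 := by
    intro z
    rcases z with ⟨t, b⟩
    cases b <;> simp [davPoint, hamY_nonneg, hamY_le_one]
  have hy1 : ∀ z : (Fin n → Bool) × Bool, (davPoint n σ z).2 ≤ 1 := by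
    intro z
    rcases z with ⟨t, b⟩
    cases b <;> simp [davPoint, hamY_nonneg, hamY_le_one]
  have inner : ∀ t1 : ℝ, ∫ t2 in Ico (0:ℝ) 1, discDav n σ t1 t2
      = (∑ z : (Fin n → Bool) × Bool,
          ((1 - (davPoint n σ z).2) / 2 ^ (n+1)) * (if (davPoint n σ z).1 < t1 then (1:ℝ) else 0))
        - t1 * (1/2) := by
    intro t1
    unfold discDav
    have e1 : ∀ t2 : ℝ, (∑ z : (Fin n → Bool) × Bool,
        if (davPoint n σ z).1 < t1 ∧ (davPoint n σ z).2 < t2 then (1:ℝ) else 0) / 2 ^ (n+1)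
        = ∑ z : (Fin n → Bool) × Bool,
            ((if (davPoint n σ z).1 < t1 then (1:ℝ) else 0) / 2 ^ (n+1))
              * (if (davPoint n σ z).2 < t2 then (1:ℝ) else 0) := by
      intro t2
      rw [Finset.sum_div]
      refine Finset.sum_congr rfl fun z _ => ?_
      by_cases h1 : (davPoint n σ z).1 < t1 <;> by_cases h2 : (davPoint n σ z).2 < t2 <;>
        simp [h1, h2]
    simp_rw [e1]
    rw [integral_sub (integrable_finset_sum _ (fun z _ => aux_intOn _ _))
      (aux_intmul t1)]
    rw [integral_finset_sum _ (fun z _ => aux_intOn _ _)]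
    have e2 : ∀ z : (Fin n → Bool) × Bool,
        (∫ t2 in Ico (0:ℝ) 1,
          ((if (davPoint n σ z).1 < t1 then (1:ℝ) else 0) / 2 ^ (n+1))
            * (if (davPoint n σ z).2 < t2 then (1:ℝ) else 0))
        = ((if (davPoint n σ z).1 < t1 then (1:ℝ) else 0) / 2 ^ (n+1))
            * (1 - (davPoint n σ z).2) :=
      fun z => aux_keymul _ _ (hy0 z) (hy1 z)
    rw [Finset.sum_congr rfl (fun z _ => e2 z), integral_const_mul, aux_int_id]
    congr 1
    exact Finset.sum_congr rfl fun z _ => by ring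
  simp_rw [inner]
  rw [integral_sub (integrable_finset_sum _ (fun z _ => aux_intOn _ _))
    (aux_intmul' (1/2))]
  rw [integral_finset_sum _ (fun z _ => aux_intOn _ _)]
  have e3 : ∀ z : (Fin n → Bool) × Bool,
      (∫ t1 in Ico (0:ℝ) 1,
        ((1 - (davPoint n σ z).2) / 2 ^ (n+1)) * (if (davPoint n σ z).1 < t1 then (1:ℝ) else 0))
      = ((1 - (davPoint n σ z).2) / 2 ^ (n+1)) * (1 - (davPoint n σ z).1) :=
    fun z => aux_keymul _ _ (hx0 z) (hx1 z)
  rw [Finset.sum_congr rfl (fun z _ => e3 z), integral_mul_const, aux_int_id]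
  have hsum : ∑ z : (Fin n → Bool) × Bool,
      ((1 - (davPoint n σ z).2) / 2 ^ (n+1)) * (1 - (davPoint n σ z).1)
      = ((2 ^ n + 1) / 2) / 2 ^ (n+1) := by
    have e4 : ∀ z : (Fin n → Bool) × Bool,
        ((1 - (davPoint n σ z).2) / 2 ^ (n+1)) * (1 - (davPoint n σ z).1)
        = ((1 - (davPoint n σ z).2) * (1 - (davPoint n σ z).1)) / 2 ^ (n+1) := fun z => by ring
    rw [Finset.sum_congr rfl (fun z _ => e4 z), ← Finset.sum_div]
    congr 1
    rw [Fintype.sum_prod_type]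
    have e5 : ∀ t : Fin n → Bool,
        ∑ b : Bool, (1 - (davPoint n σ (t, b)).2) * (1 - (davPoint n σ (t, b)).1)
        = 1 - hamX n t := by
      intro t
      rw [Fintype.sum_bool]
      simp [davPoint]
      ring
    rw [Finset.sum_congr rfl (fun t _ => e5 t), Finset.sum_sub_distrib, Finset.sum_const,
      aux_sum_hamX]
    simp [Finset.card_univ, Fintype.card_fun]
    ring
  rw [hsum]
  have h2n : (0:ℝ) < 2 ^ n := by positivity
  rw [pow_succ, pow_succ, pow_succ]
  field_simp
  ring
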